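/- Let (E,‖·‖) be a Banach space, let h: E → E be continuously differentiable with derivative dh: E → 𝓛(E), and let v₀ ∈ E, δ > 0, q ∈ (0,1) satisfy: (i) T := dh(v₀) ∈ 𝓛(E) is an isomorphism; (ii) ‖h(v₀)‖ < δ(1−q)/‖T^{-1}‖_{𝓛(E)}; (iii) ‖dh(y) − T‖_{𝓛(E)} ≤ q/‖T^{-1}‖_{𝓛(E)} for all y ∈ B_δ(v₀). Then h has a unique zero in B_δ(v₀). -/

import Mathlib

open Filter Metric

/-- Shadowing Lemma.
Let `E` be a Banach space, `h : E → E` continuously differentiable with derivative `dh`,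
and let `v₀ ∈ E`, `δ > 0`, `q ∈ (0,1)` satisfy: (i) `T := dh v₀` is an isomorphism (with
inverse `T.symm`); (ii) `‖h v₀‖ < δ(1−q)/‖T⁻¹‖`; (iii) `‖dh y − T‖ ≤ q/‖T⁻¹‖` for all
`y ∈ B_δ(v₀)`.  Then `h` has a unique zero in `B_δ(v₀)`. -/
theorem shadowing_lemma {E : Type*} [NormedAddCommGroup E] [NormedSpace ℝ E]
    [CompleteSpace E]
    (h : E → E) (dh : E → E →L[ℝ] E)
    (hderiv : ∀ x : E, HasFDerivAt h (dh x) x) (hcont : Continuous dh)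
    (v₀ : E) (δ q : ℝ) (hδ : 0 < δ) (hq0 : 0 < q) (hq1 : q < 1)
    (T : E ≃L[ℝ] E) (hT : (T : E →L[ℝ] E) = dh v₀)
    (hsmall : ‖h v₀‖ < δ * (1 - q) / ‖(T.symm : E →L[ℝ] E)‖)
    (hlip : ∀ y ∈ ball v₀ δ, ‖dh y - dh v₀‖ ≤ q / ‖(T.symm : E →L[ℝ] E)‖) :
    ∃! x : E, x ∈ ball v₀ δ ∧ h x = 0 := by
  set M : ℝ := ‖(T.symm : E →L[ℝ] E)‖ with hMdef
  have hM : 0 < M := by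
    rcases (norm_nonneg (T.symm : E →L[ℝ] E)).lt_or_eq with hlt | heq
    · exact hlt
    · exfalso
      rw [← hMdef] at heq
      rw [← heq, div_zero] at hsmall
      exact absurd hsmall (not_lt.2 (norm_nonneg _))
  -- the Newton map
  set g : E → E := fun x => x - T.symm (h x) with hgdef
  -- the mean value estimate
  have hmvt : ∀ x ∈ ball v₀ δ, ∀ y ∈ ball v₀ δ,
      ‖h y - h x - (T : E →L[ℝ] E) (y - x)‖ ≤ (q / M) * ‖y - x‖ := by
    intro x hx y hy
    refine (convex_ball v₀ δ).norm_image_sub_le_of_norm_hasFDerivWithin_le'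
      (fun z _ => (hderiv z).hasFDerivWithinAt) (fun z hz => ?_) hx hy
    rw [hT]
    exact hlip z hz
  -- g is q-Lipschitz on the ball
  have hcontr : ∀ x ∈ ball v₀ δ, ∀ y ∈ ball v₀ δ, ‖g x - g y‖ ≤ q * ‖x - y‖ := by
    intro x hx y hy
    have key : g x - g y = T.symm ((T : E →L[ℝ] E) (x - y) - (h x - h y)) := by
      simp only [hgdef, map_sub, ContinuousLinearEquiv.coe_coe,
        ContinuousLinearEquiv.symm_apply_apply]
      abel
    calc ‖g x - g y‖ = ‖(T.symm : E →L[ℝ] E) ((T : E →L[ℝ] E) (x - y) - (h x - h y))‖ := by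
          rw [key]; rfl
      _ ≤ M * ‖(T : E →L[ℝ] E) (x - y) - (h x - h y)‖ :=
          (T.symm : E →L[ℝ] E).le_opNorm _
      _ = M * ‖h x - h y - (T : E →L[ℝ] E) (x - y)‖ := by rw [← norm_neg]; ring_nf; congr 1; abel
      _ ≤ M * ((q / M) * ‖x - y‖) := by
          refine mul_le_mul_of_nonneg_left ?_ hM.le
          exact hmvt y hy x hx
      _ = q * ‖x - y‖ := by field_simp
  -- the initial displacement
  set c : ℝ := ‖g v₀ - v₀‖ with hcdef
  have hc0 : 0 ≤ c := norm_nonneg _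
  have hcδ : c < δ * (1 - q) := by
    have : g v₀ - v₀ = -(T.symm : E →L[ℝ] E) (h v₀) := by simp [hgdef]
    rw [hcdef, this, norm_neg]
    calc ‖(T.symm : E →L[ℝ] E) (h v₀)‖ ≤ M * ‖h v₀‖ := (T.symm : E →L[ℝ] E).le_opNorm _
      _ < M * (δ * (1 - q) / M) := by
          exact mul_lt_mul_of_pos_left hsmall hM
      _ = δ * (1 - q) := by field_simp
  have h1q : 0 < 1 - q := by linarith
  set r : ℝ := c / (1 - q) with hrdef
  have hr0 : 0 ≤ r := div_nonneg hc0 h1q.le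
  have hrδ : r < δ := by
    rw [hrdef, div_lt_iff₀ h1q]
    linarith [hcδ]
  have hsub : closedBall v₀ r ⊆ ball v₀ δ := fun x hx => by
    rw [mem_closedBall] at hx
    rw [mem_ball]
    exact lt_of_le_of_lt hx hrδ
  -- g maps the closed ball of radius r into itself
  have hmaps : Set.MapsTo g (closedBall v₀ r) (closedBall v₀ r) := by
    intro x hx
    rw [mem_closedBall, dist_eq_norm]
    have hx' : x ∈ ball v₀ δ := hsub hx
    have hv : v₀ ∈ ball v₀ δ := mem_ball_self hδ
    have h1 : ‖g x - g v₀‖ ≤ q * ‖x - v₀‖ := hcontr x hx' v₀ hv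
    have h2 : ‖x - v₀‖ ≤ r := by rw [mem_closedBall, dist_eq_norm] at hx; exact hx
    calc ‖g x - v₀‖ ≤ ‖g x - g v₀‖ + ‖g v₀ - v₀‖ := norm_sub_le_norm_sub_add_norm_sub _ _ _
      _ ≤ q * r + c := by
          refine add_le_add (h1.trans ?_) le_rfl
          exact mul_le_mul_of_nonneg_left h2 hq0.le
      _ = r := by rw [hrdef]; field_simp; ring
  -- the contraction constant
  set K : NNReal := ⟨q, hq0.le⟩ with hKdef
  have hK1 : K < 1 := by
    rw [← NNReal.coe_lt_coe]
    exact hq1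
  have hcw : ContractingWith K (hmaps.restrict g _ _) := by
    constructor
    · exact hK1
    · apply LipschitzWith.of_dist_le_mul
      intro x y
      rw [Subtype.dist_eq, Subtype.dist_eq, dist_eq_norm, dist_eq_norm]
      exact hcontr x (hsub x.2) y (hsub y.2)
  have hv₀r : v₀ ∈ closedBall v₀ r := mem_closedBall_self hr0
  obtain ⟨y, hys, hfy, -⟩ := hcw.exists_fixedPoint'
    (isClosed_closedBall.isComplete) hmaps hv₀r (edist_ne_top _ _)
  have hyzero : h y = 0 := by
    have : T.symm (h y) = 0 := by
      have := hfy
      simp only [Function.IsFixedPt, hgdef] at this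
      have h2 : y - T.symm (h y) = y := this
      have := sub_eq_self.mp h2
      exact this
    have := congrArg T this
    simpa using this
  have hyball : y ∈ ball v₀ δ := hsub hys
  refine ⟨y, ⟨hyball, hyzero⟩, ?_⟩
  rintro x ⟨hxball, hxzero⟩
  -- uniqueness: both are fixed points of g in the ball
  have hle : ‖x - y‖ ≤ q * ‖x - y‖ := by
    have hgx : g x = x := by simp [hgdef, hxzero]
    have hgy : g y = y := by simp [hgdef, hyzero]
    calc ‖x - y‖ = ‖g x - g y‖ := by rw [hgx, hgy]
      _ ≤ q * ‖x - y‖ := hcontr x hxball y hyball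
  by_contra hne
  have hpos : 0 < ‖x - y‖ := norm_pos_iff.2 (sub_ne_zero.2 hne)
  nlinarith
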